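/- Let p be a distribution on n+1 colors of the form p(n,x) = (x, (1−x)/n, ..., (1−x)/n) with x ∈ (1/(n+1), 1). Then the discrepancy satisfies D(p) = x²/(x² + (1−x)²/n) − x² ∑_{k=0}^{n} (k+1)! · C(n,k) · ((1−x)/n)^k, i.e., the total variation distance between the Method 1 and Method 2 pair distributions equals P(X=0) − P(Y=0). -/

import Mathlib

open Finset

lemma sumProd_const {α : Type*} [DecidableEq α] (s : Finset α) (f : α → ℝ) (c : ℝ)
    (h : ∀ l ∈ s, f l = c) (k : ℕ) :
    ∑ J ∈ Finset.powersetCard k s, ∏ l ∈ J, f l = (s.card.choose k : ℝ) * c ^ k := by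
  have key : ∀ J ∈ Finset.powersetCard k s, ∏ l ∈ J, f l = c ^ k := by
    intro J hJ
    rw [Finset.mem_powersetCard] at hJ
    rw [Finset.prod_congr rfl (fun l hl => h l (hJ.1 hl)), Finset.prod_const, hJ.2]
  rw [Finset.sum_congr rfl key, Finset.sum_const, Finset.card_powersetCard, nsmul_eq_mul]

lemma sumProd_insert {α : Type*} [DecidableEq α] (a : α) (s : Finset α) (ha : a ∉ s)
    (f : α → ℝ) (k : ℕ) :
    ∑ J ∈ Finset.powersetCard (k + 1) (insert a s), ∏ l ∈ J, f l =
      (∑ J ∈ Finset.powersetCard (k + 1) s, ∏ l ∈ J, f l) +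
        f a * ∑ J ∈ Finset.powersetCard k s, ∏ l ∈ J, f l := by
  rw [Finset.powersetCard_succ_insert ha, Finset.sum_union, Finset.sum_image]
  · congr 1
    rw [Finset.mul_sum]
    refine Finset.sum_congr rfl fun J hJ => ?_
    rw [Finset.mem_powersetCard] at hJ
    rw [Finset.prod_insert (fun hain => ha (hJ.1 hain))]
  · intro J hJ K hK hJK
    rw [Finset.mem_coe, Finset.mem_powersetCard] at hJ hK
    have hJa : a ∉ J := fun h' => ha (hJ.1 h')
    have hKa : a ∉ K := fun h' => ha (hK.1 h')
    rw [← Finset.erase_insert hJa, hJK, Finset.erase_insert hKa]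
  · rw [Finset.disjoint_left]
    intro J hJ hJ'
    rw [Finset.mem_powersetCard] at hJ
    rw [Finset.mem_image] at hJ'
    obtain ⟨K, _, rfl⟩ := hJ'
    exact ha (hJ.1 (Finset.mem_insert_self a K))

lemma choose_cast_succ (n k : ℕ) :
    ((k : ℝ) + 1) * (n.choose (k + 1)) = ((n : ℝ) - k) * (n.choose k) := by
  rcases le_or_gt n k with h | h
  · rcases eq_or_lt_of_le h with rfl | h'
    · simp [Nat.choose_succ_self]
    · rw [Nat.choose_eq_zero_of_lt h', Nat.choose_eq_zero_of_lt (by omega)]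
      simp
  · have h2 := Nat.choose_succ_right_eq n k
    have hcast : ((n.choose (k+1) * (k+1) : ℕ) : ℝ) = ((n.choose k * (n - k) : ℕ) : ℝ) := by
      exact_mod_cast congrArg (Nat.cast : ℕ → ℝ) h2
    push_cast [Nat.cast_sub h.le] at hcast
    linarith

lemma n_mul_choose (n k : ℕ) (hn : 1 ≤ n) :
    (n : ℝ) * ((n - 1).choose k) = ((k : ℝ) + 1) * (n.choose (k + 1)) := by
  have h := Nat.add_one_mul_choose_eq (n - 1) k
  rw [Nat.sub_add_cancel hn] at h
  have h' : ((n * (n-1).choose k : ℕ) : ℝ) = ((n.choose (k+1) * (k+1) : ℕ) : ℝ) := by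
    exact_mod_cast congrArg (Nat.cast : ℕ → ℝ) h
  push_cast at h'
  linarith

lemma per_k (n k : ℕ) (x q : ℝ) (hxq : x + n * q = 1) :
    ((k : ℝ) + 1) * ((k+1).factorial) * (n.choose (k + 1)) * q ^ (k + 2) +
      x ^ 2 * ((k+1).factorial) * (n.choose k) * q ^ k +
      (k : ℝ) * ((k+1).factorial) * x * (n.choose k) * q ^ (k + 1) =
    (((k+1).factorial : ℝ) * ((n.choose (k+1)) * q ^ (k+1) + x * (n.choose k) * q ^ k)) -
    (((k+2).factorial : ℝ) * ((n.choose (k+2)) * q ^ (k+2) + x * (n.choose (k+1)) * q ^ (k+1))) := by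
  have h1 := choose_cast_succ n k
  have h2 := choose_cast_succ n (k + 1)
  have hf : ((k+2).factorial : ℝ) = ((k : ℝ) + 2) * ((k+1).factorial) := by
    push_cast [Nat.factorial_succ (k+1)]
    ring
  have hx : x = 1 - n * q := by linarith
  rw [hf, hx]
  push_cast at h1 h2 ⊢
  linear_combination (((k+1).factorial : ℝ) * q ^ (k+1) * (1 - (n:ℝ)*q)) * h1 +
    (((k+1).factorial : ℝ) * q ^ (k+2)) * h2

lemma norm_sum (n : ℕ) (hn : 1 ≤ n) (x q : ℝ) (hxq : x + n * q = 1) :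
    x ^ 2 * (∑ k ∈ range (n+1), ((k+1).factorial : ℝ) * (n.choose k) * q ^ k)
      + (n * q ^ 2) * ((∑ k ∈ range (n+1), ((k+1).factorial : ℝ) * ((n-1).choose k) * q ^ k)
        + x * ∑ k ∈ range (n+1), ((k+2).factorial : ℝ) * ((n-1).choose k) * q ^ k) = 1 := by
  set P3 : ℕ → ℝ := fun k => (k:ℝ) * ((k+1).factorial) * x * (n.choose k) * q ^ (k+1) with hP3
  set u : ℕ → ℝ := fun m => (m.factorial : ℝ) * ((n.choose m) * q ^ m + x * (n.choose (m-1)) * q ^ (m-1)) with hu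
  have hB2 : ∑ k ∈ range (n+1), P3 (k+1) = ∑ k ∈ range (n+1), P3 k := by
    have e1 := Finset.sum_range_succ' P3 (n+1)
    have e2 := Finset.sum_range_succ P3 (n+1)
    have h0 : P3 0 = 0 := by simp [hP3]
    have hn1 : P3 (n+1) = 0 := by
      simp [hP3, Nat.choose_eq_zero_of_lt (Nat.lt_succ_self n)]
    rw [h0, add_zero] at e1
    rw [hn1, add_zero] at e2
    rw [← e1, e2]
  calc x ^ 2 * (∑ k ∈ range (n+1), ((k+1).factorial : ℝ) * (n.choose k) * q ^ k)
      + (n * q ^ 2) * ((∑ k ∈ range (n+1), ((k+1).factorial : ℝ) * ((n-1).choose k) * q ^ k)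
        + x * ∑ k ∈ range (n+1), ((k+2).factorial : ℝ) * ((n-1).choose k) * q ^ k)
      = ∑ k ∈ range (n+1), (x ^ 2 * (((k+1).factorial : ℝ) * (n.choose k) * q ^ k)
          + (n * q ^ 2) * (((k+1).factorial : ℝ) * ((n-1).choose k) * q ^ k)
          + (n * q ^ 2 * x) * (((k+2).factorial : ℝ) * ((n-1).choose k) * q ^ k)) := by
        rw [Finset.sum_add_distrib, Finset.sum_add_distrib, ← Finset.mul_sum, ← Finset.mul_sum, ← Finset.mul_sum]
        ring
    _ = ∑ k ∈ range (n+1), (x ^ 2 * (((k+1).factorial : ℝ) * (n.choose k) * q ^ k)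
          + ((k : ℝ) + 1) * ((k+1).factorial) * (n.choose (k+1)) * q ^ (k+2)
          + P3 (k+1)) := by
        refine Finset.sum_congr rfl fun k _ => ?_
        have h := n_mul_choose n k hn
        have hfp : (((k+1)+1).factorial : ℝ) = ((k:ℝ)+2) * ((k+1).factorial) := by
          push_cast [Nat.factorial_succ (k+1)]; ring
        simp only [hP3]
        push_cast [hfp]
        linear_combination (((k+1).factorial : ℝ) * q ^ (k+2) + ((k:ℝ)+2) * ((k+1).factorial) * x * q ^ (k+2)) * h
    _ = ∑ k ∈ range (n+1), (x ^ 2 * (((k+1).factorial : ℝ) * (n.choose k) * q ^ k)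
          + ((k : ℝ) + 1) * ((k+1).factorial) * (n.choose (k+1)) * q ^ (k+2)) +
        ∑ k ∈ range (n+1), P3 (k+1) := by
        rw [← Finset.sum_add_distrib]
    _ = ∑ k ∈ range (n+1), (x ^ 2 * (((k+1).factorial : ℝ) * (n.choose k) * q ^ k)
          + ((k : ℝ) + 1) * ((k+1).factorial) * (n.choose (k+1)) * q ^ (k+2)) +
        ∑ k ∈ range (n+1), P3 k := by rw [hB2]
    _ = ∑ k ∈ range (n+1), (u (k+1) - u (k+2)) := by
        rw [← Finset.sum_add_distrib]
        refine Finset.sum_congr rfl fun k _ => ?_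
        have h := per_k n k x q hxq
        have hu1 : u (k+1) = ((k+1).factorial : ℝ) * ((n.choose (k+1)) * q ^ (k+1) + x * (n.choose k) * q ^ k) := by
          simp [hu]
        have hu2 : u (k+2) = ((k+2).factorial : ℝ) * ((n.choose (k+2)) * q ^ (k+2) + x * (n.choose (k+1)) * q ^ (k+1)) := by
          simp [hu]
        rw [hu1, hu2, ← h, hP3]
        ring
    _ = u 1 - u (n+2) := Finset.sum_range_sub' (fun k => u (k+1)) (n+1)
    _ = 1 := by
        have h1 : u 1 = x + n * q := by
          simp [hu, Nat.choose_one_right]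
          ring
        have h2 : u (n+2) = 0 := by
          have c1 : n.choose (n+2) = 0 := Nat.choose_eq_zero_of_lt (by omega)
          have c2 : n.choose (n+2-1) = 0 := Nat.choose_eq_zero_of_lt (by omega)
          simp [hu, c1, c2]
        rw [h1, h2, hxq, sub_zero]

lemma T_le (n : ℕ) (hn : 1 ≤ n) (x q : ℝ) (hq : 0 ≤ q) (hqx : q ≤ x) :
    ∑ k ∈ range (n+1), ((k+1).factorial : ℝ) * (n.choose k) * q ^ k ≤
      (∑ k ∈ range (n+1), ((k+1).factorial : ℝ) * ((n-1).choose k) * q ^ k)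
        + x * ∑ k ∈ range (n+1), ((k+2).factorial : ℝ) * ((n-1).choose k) * q ^ k := by
  set D : ℕ → ℝ := fun k => ((k+1).factorial : ℝ) * ((n.choose k : ℝ) - ((n-1).choose k)) * q ^ k with hD
  have hsplit : ∑ k ∈ range (n+1), ((k+1).factorial : ℝ) * (n.choose k) * q ^ k
      = (∑ k ∈ range (n+1), ((k+1).factorial : ℝ) * ((n-1).choose k) * q ^ k)
        + ∑ k ∈ range (n+1), D k := by
    rw [← Finset.sum_add_distrib]
    refine Finset.sum_congr rfl fun k _ => ?_
    simp only [hD]; ring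
  have hDval : ∑ k ∈ range (n+1), D k = ∑ k ∈ range n, ((k+2).factorial : ℝ) * ((n-1).choose k) * q ^ (k+1) := by
    rw [Finset.sum_range_succ' D n]
    have h0 : D 0 = 0 := by simp [hD]
    rw [h0, add_zero]
    refine Finset.sum_congr rfl fun k _ => ?_
    have hp : n.choose (k+1) = (n-1).choose k + (n-1).choose (k+1) := by
      have h := Nat.choose_succ_succ (n-1) k
      simp only [Nat.succ_eq_add_one] at h
      rwa [Nat.sub_add_cancel hn] at h
    simp only [hD, hp]
    push_cast
    ring
  have hxB : ∑ k ∈ range n, ((k+2).factorial : ℝ) * ((n-1).choose k) * q ^ (k+1) ≤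
      x * ∑ k ∈ range (n+1), ((k+2).factorial : ℝ) * ((n-1).choose k) * q ^ k := by
    rw [Finset.mul_sum, Finset.sum_range_succ]
    have hz : x * (((n+2).factorial : ℝ) * ((n-1).choose n) * q ^ n) = 0 := by
      rw [Nat.choose_eq_zero_of_lt (by omega)]
      simp
    rw [hz, add_zero]
    refine Finset.sum_le_sum fun k _ => ?_
    have h1 : (0:ℝ) ≤ ((k+2).factorial : ℝ) * ((n-1).choose k) := by positivity
    have h2 : (0:ℝ) ≤ q ^ k := pow_nonneg hq k
    have h3 : q * q ^ k ≤ x * q ^ k := mul_le_mul_of_nonneg_right hqx h2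
    calc ((k+2).factorial : ℝ) * ((n-1).choose k) * q ^ (k+1)
        = ((k+2).factorial : ℝ) * ((n-1).choose k) * (q * q ^ k) := by ring
      _ ≤ ((k+2).factorial : ℝ) * ((n-1).choose k) * (x * q ^ k) := by
          exact mul_le_mul_of_nonneg_left h3 h1
      _ = x * (((k+2).factorial : ℝ) * ((n-1).choose k) * q ^ k) := by ring
  rw [hsplit, hDval]
  linarith

theorem stmt_12 (n : ℕ) (hn : 1 ≤ n) (x : ℝ)
    (hx : x ∈ Set.Ioo (1 / (n + 1) : ℝ) 1)
    (p : Fin (n + 1) → ℝ) (hp : ∀ i, p i = if i = 0 then x else (1 - x) / n) :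
    (1 / 2) * ∑ i, |p i ^ 2 / (∑ j, p j ^ 2) -
        p i ^ 2 * ∑ k ∈ Finset.range (n + 1), (Nat.factorial (k + 1) : ℝ) *
          ∑ J ∈ Finset.powersetCard k (Finset.univ.erase i), ∏ l ∈ J, p l| =
      x ^ 2 / (x ^ 2 + (1 - x) ^ 2 / n) -
        x ^ 2 * ∑ k ∈ Finset.range (n + 1),
          (Nat.factorial (k + 1) : ℝ) * (n.choose k) * ((1 - x) / n) ^ k := by
  obtain ⟨hx1, hx2⟩ := hx
  have hnR : (0:ℝ) < n := by exact_mod_cast hn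
  have hn0 : (n:ℝ) ≠ 0 := ne_of_gt hnR
  set q : ℝ := (1 - x) / n with hqdef
  have hq0 : 0 < q := div_pos (by linarith) hnR
  have hxq : x + n * q = 1 := by
    rw [hqdef]; field_simp; ring
  have hx0 : 0 < x := lt_trans (by positivity) hx1
  have hqx : q < x := by
    rw [hqdef, div_lt_iff₀ hnR]
    rw [div_lt_iff₀ (by positivity : (0:ℝ) < (n:ℝ)+1)] at hx1
    nlinarith
  have hp0 : p 0 = x := by rw [hp]; simp
  have hpi : ∀ i : Fin (n+1), i ≠ 0 → p i = q := by
    intro i hi; rw [hp]; simp [hi]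
  have hcard_erase : ∀ i : Fin (n+1), (Finset.univ.erase i).card = n := by
    intro i
    rw [Finset.card_erase_of_mem (Finset.mem_univ i), Finset.card_univ, Fintype.card_fin]
    omega
  -- sum of squares
  have hpsq : ∑ j, p j ^ 2 = x ^ 2 + n * q ^ 2 := by
    rw [← Finset.add_sum_erase Finset.univ (fun j => p j ^ 2) (Finset.mem_univ (0 : Fin (n+1)))]
    rw [hp0, Finset.sum_congr rfl (fun j hj => by rw [hpi j (Finset.mem_erase.1 hj).1]),
      Finset.sum_const, hcard_erase, nsmul_eq_mul]
  -- inner sum for i = 0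
  have hinner0 : ∀ k, ∑ J ∈ Finset.powersetCard k (Finset.univ.erase (0 : Fin (n+1))), ∏ l ∈ J, p l
      = (n.choose k : ℝ) * q ^ k := by
    intro k
    rw [sumProd_const _ p q (fun l hl => hpi l (Finset.mem_erase.1 hl).1), hcard_erase]
  have hF0sum : ∑ k ∈ Finset.range (n+1), (Nat.factorial (k+1) : ℝ) *
      ∑ J ∈ Finset.powersetCard k (Finset.univ.erase (0 : Fin (n+1))), ∏ l ∈ J, p l
      = ∑ k ∈ Finset.range (n+1), ((k+1).factorial : ℝ) * (n.choose k) * q ^ k := by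
    refine Finset.sum_congr rfl fun k _ => ?_
    rw [hinner0 k, mul_assoc]
  -- inner k-sum for i ≠ 0
  have hFsum1 : ∀ i : Fin (n+1), i ≠ 0 → ∑ k ∈ Finset.range (n+1), (Nat.factorial (k+1) : ℝ) *
      ∑ J ∈ Finset.powersetCard k (Finset.univ.erase i), ∏ l ∈ J, p l
      = (∑ k ∈ Finset.range (n+1), ((k+1).factorial : ℝ) * ((n-1).choose k) * q ^ k)
        + x * ∑ k ∈ Finset.range (n+1), ((k+2).factorial : ℝ) * ((n-1).choose k) * q ^ k := by
    intro i hi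
    have h0s : (0 : Fin (n+1)) ∈ Finset.univ.erase i :=
      Finset.mem_erase.2 ⟨Ne.symm hi, Finset.mem_univ _⟩
    set t : Finset (Fin (n+1)) := (Finset.univ.erase i).erase 0 with ht
    have hins : insert (0 : Fin (n+1)) t = Finset.univ.erase i := Finset.insert_erase h0s
    have h0t : (0 : Fin (n+1)) ∉ t := Finset.notMem_erase _ _
    have htc : t.card = n - 1 := by
      rw [ht, Finset.card_erase_of_mem h0s, hcard_erase]
    have htq : ∀ l ∈ t, p l = q := fun l hl => hpi l (Finset.mem_erase.1 hl).1
    have hinner1 : ∀ k, ∑ J ∈ Finset.powersetCard k (Finset.univ.erase i), ∏ l ∈ J, p l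
        = ((n-1).choose k : ℝ) * q ^ k
          + (if k = 0 then 0 else x * (((n-1).choose (k-1) : ℝ)) * q ^ (k-1)) := by
      intro k
      cases k with
      | zero => simp
      | succ k' =>
        rw [← hins, sumProd_insert _ _ h0t, sumProd_const t p q htq, sumProd_const t p q htq,
          htc, hp0]
        simp only [Nat.succ_ne_zero, if_false, Nat.add_sub_cancel]
        ring
    rw [Finset.sum_congr rfl (fun k _ => by rw [hinner1 k])]
    have hsplit2 : ∑ k ∈ Finset.range (n+1), (Nat.factorial (k+1) : ℝ) *
        (((n-1).choose k : ℝ) * q ^ k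
          + (if k = 0 then 0 else x * (((n-1).choose (k-1) : ℝ)) * q ^ (k-1)))
        = (∑ k ∈ Finset.range (n+1), ((k+1).factorial : ℝ) * ((n-1).choose k) * q ^ k)
          + ∑ k ∈ Finset.range (n+1), ((k+1).factorial : ℝ) *
            (if k = 0 then 0 else x * (((n-1).choose (k-1) : ℝ)) * q ^ (k-1)) := by
      rw [← Finset.sum_add_distrib]
      refine Finset.sum_congr rfl fun k _ => ?_
      ring
    rw [hsplit2]
    congr 1
    -- ite sum equals x * B
    set E : ℕ → ℝ := fun k => ((k+1).factorial : ℝ) *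
      (if k = 0 then 0 else x * (((n-1).choose (k-1) : ℝ)) * q ^ (k-1)) with hE
    have e1 := Finset.sum_range_succ' E n
    have hE0 : E 0 = 0 := by simp [hE]
    rw [hE0, add_zero] at e1
    rw [e1]
    rw [Finset.mul_sum, Finset.sum_range_succ]
    have hz : x * (((n+2).factorial : ℝ) * ((n-1).choose n) * q ^ n) = 0 := by
      rw [Nat.choose_eq_zero_of_lt (by omega)]
      simp
    rw [hz, add_zero]
    refine Finset.sum_congr rfl fun k _ => ?_
    simp only [hE, Nat.succ_ne_zero, if_false, Nat.add_sub_cancel]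
    ring
  -- abbreviations
  set T0 : ℝ := ∑ k ∈ Finset.range (n+1), ((k+1).factorial : ℝ) * (n.choose k) * q ^ k with hT0
  set A : ℝ := ∑ k ∈ Finset.range (n+1), ((k+1).factorial : ℝ) * ((n-1).choose k) * q ^ k with hA
  set B : ℝ := ∑ k ∈ Finset.range (n+1), ((k+2).factorial : ℝ) * ((n-1).choose k) * q ^ k with hB
  have hnorm := norm_sum n hn x q hxq
  have hle := T_le n hn x q hq0.le hqx.le
  rw [← hT0, ← hA, ← hB] at hnorm hle
  have hSpos : (0:ℝ) < x ^ 2 + n * q ^ 2 := by positivity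
  have hnn : (0:ℝ) ≤ (n:ℝ) * q ^ 2 := by positivity
  have hT0S : T0 * (x ^ 2 + n * q ^ 2) ≤ 1 := by nlinarith
  have hT1S : 1 ≤ (A + x * B) * (x ^ 2 + n * q ^ 2) := by nlinarith [sq_nonneg x]
  have hd0 : 0 ≤ x ^ 2 / (x ^ 2 + n * q ^ 2) - x ^ 2 * T0 := by
    rw [sub_nonneg, ← sub_nonneg]
    have : x ^ 2 * T0 ≤ x ^ 2 / (x ^ 2 + n * q ^ 2) := by
      rw [le_div_iff₀ hSpos]
      nlinarith [sq_nonneg x]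
    linarith
  have hd1 : q ^ 2 / (x ^ 2 + n * q ^ 2) - q ^ 2 * (A + x * B) ≤ 0 := by
    have : q ^ 2 / (x ^ 2 + n * q ^ 2) ≤ q ^ 2 * (A + x * B) := by
      rw [div_le_iff₀ hSpos]
      nlinarith [sq_nonneg q]
    linarith
  -- split main sum
  have herase' : ∀ i ∈ Finset.univ.erase (0 : Fin (n+1)),
      |p i ^ 2 / (∑ j, p j ^ 2) - p i ^ 2 * ∑ k ∈ Finset.range (n + 1), (Nat.factorial (k + 1) : ℝ) *
          ∑ J ∈ Finset.powersetCard k (Finset.univ.erase i), ∏ l ∈ J, p l|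
        = |q ^ 2 / (x ^ 2 + n * q ^ 2) - q ^ 2 * (A + x * B)| := by
    intro i hi
    have hi0 : i ≠ 0 := (Finset.mem_erase.1 hi).1
    rw [hpi i hi0, hFsum1 i hi0, hpsq]
  rw [← Finset.add_sum_erase Finset.univ _ (Finset.mem_univ (0 : Fin (n+1)))]
  rw [Finset.sum_congr rfl herase', Finset.sum_const, hcard_erase, nsmul_eq_mul]
  rw [hp0, hF0sum, hpsq]
  rw [abs_of_nonneg hd0, abs_of_nonpos hd1]
  have hden : x ^ 2 + (1 - x) ^ 2 / (n:ℝ) = x ^ 2 + n * q ^ 2 := by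
    rw [hqdef]; field_simp
  rw [hden]
  have hSS : x ^ 2 / (x ^ 2 + n * q ^ 2) + (n:ℝ) * (q ^ 2 / (x ^ 2 + n * q ^ 2)) = 1 := by
    field_simp
  have expand : (n:ℝ) * q ^ 2 * (A + x * B) = (n:ℝ) * (q ^ 2 * (A + x * B)) := by ring
  linarith [hnorm, hSS]
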